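/- arXiv:1202.4171 — 16 statements merged into one kernel-verified Lean document; each statement's English description precedes it below -/
import Mathlib

section
/- Let e, r be integers with e ≥ 0 and 0 ≤ r ≤ 2^e. Then for every integer n ≥ 0, s(2^e · n + r) = s(r)·s(n+1) + s(2^e − r)·s(n). -/
theorem reznick (s : ℕ → ℕ) (h0 : s 0 = 0) (h1 : s 1 = 1)
    (he : ∀ n, s (2 * n) = s n) (ho : ∀ n, s (2 * n + 1) = s n + s (n + 1)) :
    ∀ e r : ℕ, r ≤ 2 ^ e → ∀ n : ℕ,
      s (2 ^ e * n + r) = s r * s (n + 1) + s (2 ^ e - r) * s n := by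
  intro e
  induction e with
  | zero =>
    intro r hr n
    interval_cases r <;> simp [h0, h1]
  | succ e ih =>
    intro r hr n
    have hpow : 2 ^ (e + 1) = 2 * 2 ^ e := by rw [pow_succ]; ring
    rcases Nat.even_or_odd r with ⟨k, hk⟩ | ⟨k, hk⟩
    · subst hk
      have hk2 : k ≤ 2 ^ e := by omega
      have e1 : 2 ^ (e + 1) * n + (k + k) = 2 * (2 ^ e * n + k) := by
        rw [hpow]; ring
      have e2 : k + k = 2 * k := by ring
      have e3 : 2 ^ (e + 1) - 2 * k = 2 * (2 ^ e - k) := by omega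
      rw [e1, he, ih k hk2 n, e2, he, e3, he]
    · subst hk
      have hk2 : k < 2 ^ e := by omega
      have e1 : 2 ^ (e + 1) * n + (2 * k + 1) = 2 * (2 ^ e * n + k) + 1 := by
        rw [hpow]; ring
      have e2 : 2 ^ e * n + k + 1 = 2 ^ e * n + (k + 1) := by ring
      have e3 : 2 ^ (e + 1) - (2 * k + 1) = 2 * (2 ^ e - (k + 1)) + 1 := by omega
      have e4 : 2 ^ e - (k + 1) + 1 = 2 ^ e - k := by omega
      rw [e1, ho, e2, ih k hk2.le n, ih (k + 1) hk2 n, ho, e3, ho, e4]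
      ring
end

section
/- Let e, r be integers with e ≥ 0 and 0 ≤ r ≤ 2^e. Then for every integer n ≥ 1, t(2^e · n + r) = (−1)^e · (s(r)·t(n+1) + s(2^e − r)·t(n)). -/
theorem twisted_reznick (s : ℕ → ℤ) (h0 : s 0 = 0) (h1 : s 1 = 1)
    (he : ∀ n, s (2 * n) = s n) (ho : ∀ n, s (2 * n + 1) = s n + s (n + 1))
    (t : ℕ → ℤ) (t0 : t 0 = 0) (t1 : t 1 = 1)
    (te : ∀ n, 1 ≤ n → t (2 * n) = -t n) (todd : ∀ n, 1 ≤ n → t (2 * n + 1) = -t n - t (n + 1)) :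
    ∀ e r : ℕ, r ≤ 2 ^ e → ∀ n : ℕ, 1 ≤ n →
      t (2 ^ e * n + r) = (-1) ^ e * (s r * t (n + 1) + s (2 ^ e - r) * t n) := by
  intro e
  induction e with
  | zero =>
    intro r hr n hn
    interval_cases r <;> simp [h0, h1]
  | succ e ih =>
    intro r hr n hn
    have hP : 1 ≤ 2 ^ e := Nat.one_le_two_pow
    have hpow : 2 ^ (e + 1) = 2 * 2 ^ e := by ring
    have hpos : ∀ q : ℕ, 1 ≤ 2 ^ e * n + q := fun q => le_trans
      (le_trans hn (Nat.le_mul_of_pos_left n (by positivity))) (Nat.le_add_right _ _)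
    rcases Nat.even_or_odd r with ⟨q, hq⟩ | ⟨q, hq⟩
    · subst hq
      have hq2 : q ≤ 2 ^ e := by omega
      have harg : 2 ^ (e + 1) * n + (q + q) = 2 * (2 ^ e * n + q) := by ring
      rw [harg, te _ (hpos q), ih q hq2 n hn]
      have h1' : q + q = 2 * q := by ring
      have h2' : 2 ^ (e + 1) - 2 * q = 2 * (2 ^ e - q) := by omega
      rw [h1', h2', he, he]
      ring
    · subst hq
      have hq2 : q < 2 ^ e := by omega
      have harg : 2 ^ (e + 1) * n + (2 * q + 1) = 2 * (2 ^ e * n + q) + 1 := by ring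
      rw [harg, todd _ (hpos q)]
      have harg2 : 2 ^ e * n + q + 1 = 2 ^ e * n + (q + 1) := by ring
      rw [harg2, ih q (by omega) n hn, ih (q + 1) (by omega) n hn]
      have h2' : 2 ^ (e + 1) - (2 * q + 1) = 2 * (2 ^ e - q - 1) + 1 := by omega
      rw [h2', ho, ho]
      have h3' : 2 ^ e - q - 1 + 1 = 2 ^ e - q := by omega
      have h4' : 2 ^ e - (q + 1) = 2 ^ e - q - 1 := by omega
      rw [h3', h4']
      ring
end

section
/- Let e, r be integers with e ≥ 0 and 0 ≤ r ≤ 2^e. Then for every integer n ≥ 0, s(r)·s(2n+5) + s(2^e − r)·s(2n+3) = s(2^e·(n+2)+r) + s(2^e·(n+1)+r). -/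
theorem coons_key (s : ℕ → ℕ) (h0 : s 0 = 0) (h1 : s 1 = 1)
    (he : ∀ n, s (2 * n) = s n) (ho : ∀ n, s (2 * n + 1) = s n + s (n + 1)) :
    ∀ e r : ℕ, r ≤ 2 ^ e → ∀ m : ℕ,
      s (2 ^ e * m + r) = s r * s (m + 1) + s (2 ^ e - r) * s m := by
  intro e
  induction e with
  | zero =>
    intro r hr m
    interval_cases r <;> simp [h0, h1]
  | succ e ih =>
    intro r hr m
    rcases Nat.even_or_odd' r with ⟨q, hq | hq⟩
    · subst hq
      have hq' : q ≤ 2 ^ e := by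
        have : 2 * q ≤ 2 * 2 ^ e := by simpa [pow_succ, mul_comm] using hr
        omega
      have e1 : 2 ^ (e + 1) * m + 2 * q = 2 * (2 ^ e * m + q) := by ring
      have e2 : 2 ^ (e + 1) - 2 * q = 2 * (2 ^ e - q) := by
        have : (2:ℕ) ^ (e+1) = 2 * 2 ^ e := by ring
        omega
      rw [e1, he, e2, he, he, ih q hq' m]
    · subst hq
      have hq' : q < 2 ^ e := by
        have : (2:ℕ) ^ (e+1) = 2 * 2 ^ e := by ring
        omega
      have e1 : 2 ^ (e + 1) * m + (2 * q + 1) = 2 * (2 ^ e * m + q) + 1 := by ring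
      have e2 : 2 ^ (e + 1) - (2 * q + 1) = 2 * (2 ^ e - q - 1) + 1 := by
        have : (2:ℕ) ^ (e+1) = 2 * 2 ^ e := by ring
        omega
      rw [e1, ho, e2, ho, ih q (le_of_lt hq') m]
      have e3 : 2 ^ e * m + q + 1 = 2 ^ e * m + (q + 1) := by ring
      rw [e3, ih (q + 1) hq' m]
      have e4 : 2 ^ e - (q + 1) = 2 ^ e - q - 1 := by omega
      have e5 : 2 ^ e - q - 1 + 1 = 2 ^ e - q := by omega
      rw [e4, ho, e5]
      ring

theorem coons_identity (s : ℕ → ℕ) (h0 : s 0 = 0) (h1 : s 1 = 1)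
    (he : ∀ n, s (2 * n) = s n) (ho : ∀ n, s (2 * n + 1) = s n + s (n + 1)) :
    ∀ e r : ℕ, r ≤ 2 ^ e → ∀ n : ℕ,
      s r * s (2 * n + 5) + s (2 ^ e - r) * s (2 * n + 3)
        = s (2 ^ e * (n + 2) + r) + s (2 ^ e * (n + 1) + r) := by
  intro e r hr n
  have key := coons_key s h0 h1 he ho e r hr
  rw [key (n + 2), key (n + 1)]
  have h5 : 2 * n + 5 = 2 * (n + 2) + 1 := by ring
  have h3 : 2 * n + 3 = 2 * (n + 1) + 1 := by ring
  rw [h5, ho, h3, ho]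
  ring
end

section
/- For all integers e ≥ 0 and all r with 0 ≤ r ≤ 2^e, the Stern sequence satisfies s(2^e + r) − s(r) = s(2^e − r). -/
theorem stern_diff (s : ℕ → ℕ) (h0 : s 0 = 0) (h1 : s 1 = 1)
    (he : ∀ n, s (2 * n) = s n) (ho : ∀ n, s (2 * n + 1) = s n + s (n + 1)) :
    ∀ e r : ℕ, r ≤ 2 ^ e →
      (s (2 ^ e + r) : ℤ) - s r = s (2 ^ e - r) := by
  intro e
  induction e with
  | zero =>
    intro r hr
    interval_cases r
    · simp [h0, h1]
    · have h2 : s 2 = s 1 := by have := he 1; simpa using this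
      simp [h0, h1, h2]
  | succ e ih =>
    intro r hr
    rcases Nat.even_or_odd r with ⟨k, hk⟩ | ⟨k, hk⟩
    · subst hk
      have hp : (2:ℕ) ^ (e + 1) = 2 * 2 ^ e := by ring
      have hk2 : k ≤ 2 ^ e := by omega
      have e1 : 2 ^ (e + 1) + (k + k) = 2 * (2 ^ e + k) := by omega
      have e2 : 2 ^ (e + 1) - (k + k) = 2 * (2 ^ e - k) := by
        have : (2:ℕ) ^ (e + 1) = 2 * 2 ^ e := by ring
        omega
      have e3 : k + k = 2 * k := by ring
      rw [e1, e2, e3, he, he, he]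
      exact ih k hk2
    · subst hk
      have hlt : 2 * k + 1 < 2 ^ (e + 1) := by
        rcases Nat.lt_or_ge (2 * k + 1) (2 ^ (e + 1)) with h | h
        · exact h
        · exfalso
          have : 2 * k + 1 = 2 ^ (e + 1) := le_antisymm hr h
          have : (2:ℕ) ^ (e + 1) = 2 * 2 ^ e := by ring
          omega
      have hk2 : k + 1 ≤ 2 ^ e := by
        have : (2:ℕ) ^ (e + 1) = 2 * 2 ^ e := by ring
        omega
      have hk1 : k ≤ 2 ^ e := le_trans (Nat.le_succ k) hk2
      have e1 : 2 ^ (e + 1) + (2 * k + 1) = 2 * (2 ^ e + k) + 1 := by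
        have : (2:ℕ) ^ (e + 1) = 2 * 2 ^ e := by ring
        omega
      have e2 : 2 ^ (e + 1) - (2 * k + 1) = 2 * (2 ^ e - (k + 1)) + 1 := by
        have : (2:ℕ) ^ (e + 1) = 2 * 2 ^ e := by ring
        omega
      rw [e1, e2, ho, ho, ho]
      have i1 := ih k hk1
      have i2 := ih (k + 1) hk2
      have e4 : 2 ^ e + k + 1 = 2 ^ e + (k + 1) := by ring
      have e5 : 2 ^ e - (k + 1) + 1 = 2 ^ e - k := by omega
      rw [e4, e5]
      push_cast
      push_cast at i1 i2
      linarith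
end

section
/- For all integers e ≥ 0 and all r with 0 ≤ r ≤ 2^e, the twisted Stern sequence satisfies t(2^{e+1} + r) + t(2^e + r) = t(3·2^e − r). -/
theorem twisted_sum (t : ℕ → ℤ) (t0 : t 0 = 0) (t1 : t 1 = 1)
    (te : ∀ n, 1 ≤ n → t (2 * n) = -t n) (todd : ∀ n, 1 ≤ n → t (2 * n + 1) = -t n - t (n + 1)) :
    ∀ e r : ℕ, r ≤ 2 ^ e →
      t (2 ^ (e + 1) + r) + t (2 ^ e + r) = t (3 * 2 ^ e - r) := by
  intro e
  induction e with
  | zero =>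
    intro r hr
    have A := te 1 (le_refl 1)
    have B := todd 1 (le_refl 1)
    norm_num at A B
    interval_cases r <;> norm_num <;> omega
  | succ e ih =>
    intro r hr
    have hpow : 1 ≤ 2 ^ e := Nat.one_le_two_pow
    have p1 : 2 ^ (e + 1) = 2 * 2 ^ e := by ring
    rcases Nat.even_or_odd r with ⟨s, hs⟩ | ⟨s, hs⟩
    · subst hs
      have hs' : s ≤ 2 ^ e := by omega
      have e1 : t (2 ^ (e + 1 + 1) + (s + s)) = -t (2 ^ (e + 1) + s) := by
        have h : 2 ^ (e + 1 + 1) + (s + s) = 2 * (2 ^ (e + 1) + s) := by ring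
        rw [h]
        exact te _ (by omega)
      have e2 : t (2 ^ (e + 1) + (s + s)) = -t (2 ^ e + s) := by
        have h : 2 ^ (e + 1) + (s + s) = 2 * (2 ^ e + s) := by ring
        rw [h]
        exact te _ (by omega)
      have e3 : t (3 * 2 ^ (e + 1) - (s + s)) = -t (3 * 2 ^ e - s) := by
        have h : 3 * 2 ^ (e + 1) - (s + s) = 2 * (3 * 2 ^ e - s) := by omega
        rw [h]
        exact te _ (by omega)
      have := ih s hs'
      rw [e1, e2, e3]
      linarith
    · subst hs
      have hs1 : s + 1 ≤ 2 ^ e := by omega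
      have e1 : t (2 ^ (e + 1 + 1) + (2 * s + 1)) =
          -t (2 ^ (e + 1) + s) - t (2 ^ (e + 1) + s + 1) := by
        have h : 2 ^ (e + 1 + 1) + (2 * s + 1) = 2 * (2 ^ (e + 1) + s) + 1 := by ring
        rw [h]
        exact todd _ (by omega)
      have e2 : t (2 ^ (e + 1) + (2 * s + 1)) = -t (2 ^ e + s) - t (2 ^ e + s + 1) := by
        have h : 2 ^ (e + 1) + (2 * s + 1) = 2 * (2 ^ e + s) + 1 := by ring
        rw [h]
        exact todd _ (by omega)
      have e3 : t (3 * 2 ^ (e + 1) - (2 * s + 1)) =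
          -t (3 * 2 ^ e - (s + 1)) - t (3 * 2 ^ e - s) := by
        have h : 3 * 2 ^ (e + 1) - (2 * s + 1) = 2 * (3 * 2 ^ e - (s + 1)) + 1 := by omega
        have h2 : 3 * 2 ^ e - (s + 1) + 1 = 3 * 2 ^ e - s := by omega
        rw [h, todd _ (by omega), h2]
      have i1 := ih s (by omega)
      have i2 := ih (s + 1) hs1
      rw [e1, e2, e3]
      have a1 : 2 ^ (e + 1) + s + 1 = 2 ^ (e + 1) + (s + 1) := by omega
      have a2 : 2 ^ e + s + 1 = 2 ^ e + (s + 1) := by omega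
      rw [a1, a2]
      linarith
end

section
/- Let e, r be integers with e ≥ 0 and 0 ≤ r ≤ 2^e. Then for every integer n ≥ 1, t(2^e · n + r) = −t(2^{e+1} + r)·t(n) − t(3·2^e − r)·t(n+1). -/
theorem twisted_self (t : ℕ → ℤ) (t0 : t 0 = 0) (t1 : t 1 = 1)
    (te : ∀ n, 1 ≤ n → t (2 * n) = -t n) (todd : ∀ n, 1 ≤ n → t (2 * n + 1) = -t n - t (n + 1)) :
    ∀ e r : ℕ, r ≤ 2 ^ e → ∀ n : ℕ, 1 ≤ n →
      t (2 ^ e * n + r) = -t (2 ^ (e + 1) + r) * t n - t (3 * 2 ^ e - r) * t (n + 1) := by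
  have h2 : t 2 = -1 := by have := te 1 le_rfl; simpa [t1] using this
  have h3 : t 3 = 0 := by
    have := todd 1 le_rfl
    norm_num [t1, h2] at this
    linarith
  intro e
  induction e with
  | zero =>
    intro r hr n hn
    interval_cases r
    · norm_num [h2, h3]
    · norm_num [h2, h3]
  | succ e ih =>
    intro r hr n hn
    have hp : (2:ℕ)^(e+1) = 2 * 2^e := by ring
    have hp2 : (2:ℕ)^(e+1+1) = 2 * 2^(e+1) := by ring
    have hpos : 1 ≤ (2:ℕ)^e := Nat.one_le_two_pow
    have hmn : 1 ≤ 2^e * n := Nat.mul_pos hpos hn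
    rcases Nat.even_or_odd r with ⟨s, hs⟩ | ⟨s, hs⟩
    · have hsle : s ≤ 2^e := by omega
      have h1 : 2^(e+1)*n + r = 2*(2^e*n + s) := by rw [hp, hs]; ring
      have hge : 1 ≤ 2^e*n + s := by omega
      have c1 : 2^(e+1+1) + r = 2*(2^(e+1)+s) := by omega
      have c2 : 3*2^(e+1) - r = 2*(3*2^e - s) := by omega
      rw [h1, te _ hge, ih s hsle n hn, c1, c2, te _ (by omega : 1 ≤ 2^(e+1)+s),
        te _ (by omega : 1 ≤ 3*2^e - s)]
      ring
    · have hsle : s + 1 ≤ 2^e := by omega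
      have h1 : 2^(e+1)*n + r = 2*(2^e*n + s) + 1 := by rw [hp, hs]; ring
      have hge : 1 ≤ 2^e*n + s := by omega
      have ih2 := ih (s+1) (by omega) n hn
      rw [← add_assoc] at ih2
      have c1 : 2^(e+1+1) + r = 2*(2^(e+1)+s) + 1 := by omega
      have c2 : 3*2^(e+1) - r = 2*(3*2^e - (s+1)) + 1 := by omega
      have c3 : 3*2^e - (s+1) + 1 = 3*2^e - s := by omega
      have c4 : 2^(e+1) + (s+1) = 2^(e+1)+s+1 := by omega
      rw [h1, todd _ hge, ih s (by omega) n hn, ih2, c1, c2,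
        todd _ (by omega : 1 ≤ 2^(e+1)+s), todd _ (by omega : 1 ≤ 3*2^e - (s+1)), c3, c4]
      ring
end

section
/- Let e, r be integers with e ≥ 0 and 0 ≤ r ≤ 2^e. Then for every integer n ≥ 0, t(2^{e+1}+r)·t(2n+3) + t(3·2^e − r)·t(2n+5) = t(2^e·(n+2)+r) + t(2^e·(n+1)+r). -/
theorem twisted_coons (t : ℕ → ℤ) (t0 : t 0 = 0) (t1 : t 1 = 1)
    (te : ∀ n, 1 ≤ n → t (2 * n) = -t n) (todd : ∀ n, 1 ≤ n → t (2 * n + 1) = -t n - t (n + 1)) :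
    ∀ e r : ℕ, r ≤ 2 ^ e → ∀ n : ℕ,
      t (2 ^ (e + 1) + r) * t (2 * n + 3) + t (3 * 2 ^ e - r) * t (2 * n + 5)
        = t (2 ^ e * (n + 2) + r) + t (2 ^ e * (n + 1) + r) := by
  intro e
  induction e with
  | zero =>
    intro r hr n
    have h2 : t 2 = -1 := by have := te 1 le_rfl; rw [t1] at this; linarith
    have h3 : t 3 = 0 := by
      have := todd 1 le_rfl
      norm_num [t1, h2] at this
      linarith
    have hA : t (2 * n + 3) = -t (n + 1) - t (n + 2) := by
      have := todd (n + 1) (by omega)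
      rw [show 2 * (n + 1) + 1 = 2 * n + 3 by ring] at this
      exact this
    have hB : t (2 * n + 5) = -t (n + 2) - t (n + 3) := by
      have := todd (n + 2) (by omega)
      rw [show 2 * (n + 2) + 1 = 2 * n + 5 by ring] at this
      exact this
    interval_cases r <;> norm_num [h2, h3, hA, hB] <;> ring_nf <;>
      simp [show n + 1 + 1 = n + 2 by ring, show n + 2 + 1 = n + 3 by ring] <;> ring
  | succ e ih =>
    intro r hr n
    have hp : (2 : ℕ) ^ (e + 1) = 2 * 2 ^ e := by ring
    have hpow : 1 ≤ (2 : ℕ) ^ e := Nat.one_le_pow e 2 (by norm_num)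
    have hposk : ∀ k : ℕ, 1 ≤ k → 1 ≤ 2 ^ e * k + (if True then 0 else 0) := by
      intro k hk; simp; exact Nat.one_le_iff_ne_zero.mpr (by positivity)
    obtain ⟨s, rfl | rfl⟩ := Nat.even_or_odd' r
    · have hs : s ≤ 2 ^ e := by omega
      have h1 : t (2 ^ (e + 1 + 1) + 2 * s) = -t (2 ^ (e + 1) + s) := by
        have := te (2 ^ (e + 1) + s) (by omega)
        rw [show 2 * (2 ^ (e + 1) + s) = 2 ^ (e + 1 + 1) + 2 * s by ring] at this
        exact this
      have h2 : t (3 * 2 ^ (e + 1) - 2 * s) = -t (3 * 2 ^ e - s) := by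
        have := te (3 * 2 ^ e - s) (by omega)
        rw [show 2 * (3 * 2 ^ e - s) = 3 * 2 ^ (e + 1) - 2 * s by omega] at this
        exact this
      have h3 : t (2 ^ (e + 1) * (n + 2) + 2 * s) = -t (2 ^ e * (n + 2) + s) := by
        have := te (2 ^ e * (n + 2) + s) (by nlinarith)
        rw [show 2 * (2 ^ e * (n + 2) + s) = 2 ^ (e + 1) * (n + 2) + 2 * s by ring] at this
        exact this
      have h4 : t (2 ^ (e + 1) * (n + 1) + 2 * s) = -t (2 ^ e * (n + 1) + s) := by
        have := te (2 ^ e * (n + 1) + s) (by nlinarith)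
        rw [show 2 * (2 ^ e * (n + 1) + s) = 2 ^ (e + 1) * (n + 1) + 2 * s by ring] at this
        exact this
      rw [h1, h2, h3, h4]
      have := ih s hs n
      linarith
    · have hs : s + 1 ≤ 2 ^ e := by omega
      have h1 : t (2 ^ (e + 1 + 1) + (2 * s + 1))
          = -t (2 ^ (e + 1) + s) - t (2 ^ (e + 1) + (s + 1)) := by
        have := todd (2 ^ (e + 1) + s) (by omega)
        rw [show 2 * (2 ^ (e + 1) + s) + 1 = 2 ^ (e + 1 + 1) + (2 * s + 1) by ring,
          show 2 ^ (e + 1) + s + 1 = 2 ^ (e + 1) + (s + 1) by ring] at this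
        exact this
      have h2 : t (3 * 2 ^ (e + 1) - (2 * s + 1))
          = -t (3 * 2 ^ e - (s + 1)) - t (3 * 2 ^ e - s) := by
        have := todd (3 * 2 ^ e - (s + 1)) (by omega)
        rw [show 2 * (3 * 2 ^ e - (s + 1)) + 1 = 3 * 2 ^ (e + 1) - (2 * s + 1) by omega,
          show 3 * 2 ^ e - (s + 1) + 1 = 3 * 2 ^ e - s by omega] at this
        exact this
      have h3 : t (2 ^ (e + 1) * (n + 2) + (2 * s + 1))
          = -t (2 ^ e * (n + 2) + s) - t (2 ^ e * (n + 2) + (s + 1)) := by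
        have := todd (2 ^ e * (n + 2) + s) (by nlinarith)
        rw [show 2 * (2 ^ e * (n + 2) + s) + 1 = 2 ^ (e + 1) * (n + 2) + (2 * s + 1) by ring,
          show 2 ^ e * (n + 2) + s + 1 = 2 ^ e * (n + 2) + (s + 1) by ring] at this
        exact this
      have h4 : t (2 ^ (e + 1) * (n + 1) + (2 * s + 1))
          = -t (2 ^ e * (n + 1) + s) - t (2 ^ e * (n + 1) + (s + 1)) := by
        have := todd (2 ^ e * (n + 1) + s) (by nlinarith)
        rw [show 2 * (2 ^ e * (n + 1) + s) + 1 = 2 ^ (e + 1) * (n + 1) + (2 * s + 1) by ring,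
          show 2 ^ e * (n + 1) + s + 1 = 2 ^ e * (n + 1) + (s + 1) by ring] at this
        exact this
      rw [h1, h2, h3, h4]
      have hA := ih s (by omega) n
      have hB := ih (s + 1) hs n
      linarith
end

section
/- Let v : ℕ → ℝ be a sequence such that there exist n₀ ≥ 0 and real numbers a, b, c with v(2n) = a·v(n) and v(2n+1) = b·v(n) + c·v(n+1) for all n ≥ n₀. Then for all integers e ≥ 0 and r with 0 ≤ r ≤ 2^e, there exist real numbers A and B such that for all n ≥ n₀, v(2^e·n + r) = A·v(n) + B·v(n+1). -/
theorem general_rec (v : ℕ → ℝ) (n₀ : ℕ) (a b c : ℝ)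
    (he : ∀ n, n₀ ≤ n → v (2 * n) = a * v n)
    (ho : ∀ n, n₀ ≤ n → v (2 * n + 1) = b * v n + c * v (n + 1)) :
    ∀ e r : ℕ, r ≤ 2 ^ e → ∃ A B : ℝ, ∀ n, n₀ ≤ n →
      v (2 ^ e * n + r) = A * v n + B * v (n + 1) := by
  intro e
  induction e with
  | zero =>
    intro r hr
    interval_cases r
    · exact ⟨1, 0, fun n _ => by simp⟩
    · exact ⟨0, 1, fun n _ => by simp⟩
  | succ e ih =>
    intro r hr
    have hpow : 2 ^ (e + 1) = 2 * 2 ^ e := by ring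
    have key : ∀ n, n₀ ≤ n → n₀ ≤ 2 ^ e * n := fun n hn =>
      le_trans hn (Nat.le_mul_of_pos_left n (by positivity))
    rcases Nat.even_or_odd r with ⟨q, hq⟩ | ⟨q, hq⟩
    · have hq2 : q ≤ 2 ^ e := by omega
      obtain ⟨A, B, hAB⟩ := ih q hq2
      refine ⟨a * A, a * B, fun n hn => ?_⟩
      have h1 : 2 ^ (e + 1) * n + r = 2 * (2 ^ e * n + q) := by rw [hpow]; ring_nf; omega
      rw [h1, he _ (le_trans (key n hn) (Nat.le_add_right _ _)), hAB n hn]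
      ring
    · have hq2 : q ≤ 2 ^ e := by omega
      have hq3 : q + 1 ≤ 2 ^ e := by omega
      obtain ⟨A, B, hAB⟩ := ih q hq2
      obtain ⟨A', B', hAB'⟩ := ih (q + 1) hq3
      refine ⟨b * A + c * A', b * B + c * B', fun n hn => ?_⟩
      have h1 : 2 ^ (e + 1) * n + r = 2 * (2 ^ e * n + q) + 1 := by rw [hpow]; ring_nf; omega
      rw [h1, ho _ (le_trans (key n hn) (Nat.le_add_right _ _))]
      have h2 : 2 ^ e * n + q + 1 = 2 ^ e * n + (q + 1) := by ring
      rw [h2, hAB n hn, hAB' n hn]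
      ring
end

section
/- Let v : ℕ → ℝ satisfy v(2n) = a·v(n) and v(2n+1) = b·v(n) + c·v(n+1) for all n ≥ n₀. Then for all integers e ≥ 0 and r with 0 ≤ r ≤ 2^e, there exist real numbers A, B such that for all n ≥ n₀, A·v(2n+3) + B·v(2n+5) = c·v(2^e·(n+2)+r) + b·v(2^e·(n+1)+r). -/
theorem general_coons (v : ℕ → ℝ) (n₀ : ℕ) (a b c : ℝ)
    (he : ∀ n, n₀ ≤ n → v (2 * n) = a * v n)
    (ho : ∀ n, n₀ ≤ n → v (2 * n + 1) = b * v n + c * v (n + 1)) :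
    ∀ e r : ℕ, r ≤ 2 ^ e → ∃ A B : ℝ, ∀ n, n₀ ≤ n →
      A * v (2 * n + 3) + B * v (2 * n + 5)
        = c * v (2 ^ e * (n + 2) + r) + b * v (2 ^ e * (n + 1) + r) := by
  intro e
  induction e with
  | zero =>
    intro r hr
    interval_cases r
    · refine ⟨1, 0, fun n hn => ?_⟩
      have h := ho (n + 1) (by omega)
      rw [show 2 * (n + 1) + 1 = 2 * n + 3 by ring] at h
      simp only [pow_zero, one_mul]
      rw [h]
      ring_nf
    · refine ⟨0, 1, fun n hn => ?_⟩
      have h := ho (n + 2) (by omega)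
      rw [show 2 * (n + 2) + 1 = 2 * n + 5 by ring] at h
      simp only [pow_zero, one_mul]
      rw [h]
      ring_nf
  | succ e ih =>
    intro r hr
    have h2 : (2:ℕ) ^ (e + 1) = 2 * 2 ^ e := by ring
    have hp : 1 ≤ 2 ^ e := Nat.one_le_two_pow
    rcases Nat.even_or_odd r with ⟨s, hs⟩ | ⟨s, hs⟩
    · -- r = 2s
      have hs' : r = 2 * s := by omega
      obtain ⟨A, B, hAB⟩ := ih s (by omega)
      refine ⟨a * A, a * B, fun n hn => ?_⟩
      have hm2 : n + 2 ≤ 2 ^ e * (n + 2) := Nat.le_mul_of_pos_left _ (by omega)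
      have hm1 : n + 1 ≤ 2 ^ e * (n + 1) := Nat.le_mul_of_pos_left _ (by omega)
      have k2 : 2 ^ (e+1) * (n + 2) + r = 2 * (2 ^ e * (n + 2) + s) := by
        subst hs'; ring
      have k1 : 2 ^ (e+1) * (n + 1) + r = 2 * (2 ^ e * (n + 1) + s) := by
        subst hs'; ring
      rw [k1, k2, he _ (by omega), he _ (by omega)]
      linear_combination a * hAB n hn
    · -- r = 2s + 1
      have hs' : r = 2 * s + 1 := hs
      obtain ⟨A, B, hAB⟩ := ih s (by omega)
      obtain ⟨A', B', hAB'⟩ := ih (s + 1) (by omega)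
      refine ⟨b * A + c * A', b * B + c * B', fun n hn => ?_⟩
      have hm2 : n + 2 ≤ 2 ^ e * (n + 2) := Nat.le_mul_of_pos_left _ (by omega)
      have hm1 : n + 1 ≤ 2 ^ e * (n + 1) := Nat.le_mul_of_pos_left _ (by omega)
      have k2 : 2 ^ (e+1) * (n + 2) + r = 2 * (2 ^ e * (n + 2) + s) + 1 := by
        subst hs'; ring
      have k1 : 2 ^ (e+1) * (n + 1) + r = 2 * (2 ^ e * (n + 1) + s) + 1 := by
        subst hs'; ring
      rw [k1, k2, ho _ (by omega), ho _ (by omega)]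
      have e2 : 2 ^ e * (n + 2) + s + 1 = 2 ^ e * (n + 2) + (s + 1) := by ring
      have e1 : 2 ^ e * (n + 1) + s + 1 = 2 ^ e * (n + 1) + (s + 1) := by ring
      rw [e1, e2]
      linear_combination b * hAB n hn + c * hAB' n hn
end

section
/- Let z₃ : ℕ → ℤ be defined by z₃(0)=0, z₃(1)=1, and for n ≥ 1, z₃(2n) = −z₃(n), z₃(2n+1) = z₃(n) + z₃(n+1). Then z₃ is 3-periodic with period (0, 1, −1), i.e., z₃(3j)=0, z₃(3j+1)=1, z₃(3j+2)=−1 for all j ≥ 0. -/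
theorem z3_periodic (z₃ : ℕ → ℤ) (h0 : z₃ 0 = 0) (h1 : z₃ 1 = 1)
    (he : ∀ n, 1 ≤ n → z₃ (2 * n) = -z₃ n)
    (ho : ∀ n, 1 ≤ n → z₃ (2 * n + 1) = z₃ n + z₃ (n + 1)) :
    ∀ j : ℕ, z₃ (3 * j) = 0 ∧ z₃ (3 * j + 1) = 1 ∧ z₃ (3 * j + 2) = -1 := by
  have key : ∀ n : ℕ, z₃ n = if n % 3 = 0 then 0 else if n % 3 = 1 then 1 else -1 := by
    intro n
    induction n using Nat.strong_induction_on with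
    | _ n ih =>
      match n with
      | 0 => simpa using h0
      | 1 => simpa using h1
      | (n+2) =>
        rcases Nat.even_or_odd (n+2) with ⟨m, hm⟩ | ⟨m, hm⟩
        · have hm1 : 1 ≤ m := by omega
          have := he m hm1
          rw [show n + 2 = 2 * m by omega, this, ih m (by omega)]
          have : m % 3 = 0 ∨ m % 3 = 1 ∨ m % 3 = 2 := by omega
          rcases this with h | h | h <;> rw [h] <;>
            rw [show 2 * m % 3 = (2 * (m % 3)) % 3 by omega, h] <;> norm_num
        · have hm1 : 1 ≤ m := by omega
          have := ho m hm1
          rw [show n + 2 = 2 * m + 1 by omega, this, ih m (by omega), ih (m+1) (by omega)]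
          have : m % 3 = 0 ∨ m % 3 = 1 ∨ m % 3 = 2 := by omega
          rcases this with h | h | h <;>
            rw [show (2 * m + 1) % 3 = (2 * (m % 3) + 1) % 3 by omega,
              show (m + 1) % 3 = (m % 3 + 1) % 3 by omega, h] <;> norm_num
  intro j
  refine ⟨?_, ?_, ?_⟩ <;> rw [key] <;> simp [Nat.mul_add_mod]
end

section
/- Let z₁ : ℕ → ℤ be defined by z₁(0)=0, z₁(1)=1, and for n ≥ 0, z₁(2n)=z₁(n), z₁(2n+1)=−z₁(n)+z₁(n+1). Then for all e ≥ 0, 0 ≤ r ≤ 2^e, and n ≥ 0, z₁(2^e·n + r) = z₁(2^{e+1} + r)·z₁(n) + z₁(r)·z₁(n+1). -/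
theorem z1_formula (z₁ : ℕ → ℤ) (h0 : z₁ 0 = 0) (h1 : z₁ 1 = 1)
    (he : ∀ n, z₁ (2 * n) = z₁ n)
    (ho : ∀ n, z₁ (2 * n + 1) = -z₁ n + z₁ (n + 1)) :
    ∀ e r : ℕ, r ≤ 2 ^ e → ∀ n : ℕ,
      z₁ (2 ^ e * n + r) = z₁ (2 ^ (e + 1) + r) * z₁ n + z₁ r * z₁ (n + 1) := by
  have hz2 : z₁ 2 = 1 := by have := he 1; norm_num at this; rw [this, h1]
  have hz3 : z₁ 3 = 0 := by
    have := ho 1; norm_num at this; rw [this, h1, hz2]; ring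
  intro e
  induction e with
  | zero =>
    intro r hr n
    interval_cases r
    · simp [h0, hz2]
    · have : 2 ^ 0 * n + 1 = n + 1 := by ring
      rw [this]
      norm_num [hz3, h1]
  | succ e ih =>
    intro r hr n
    rcases Nat.even_or_odd r with ⟨q, hq⟩ | ⟨q, hq⟩
    · have hq' : q ≤ 2 ^ e := by
        have : 2 * q ≤ 2 * 2 ^ e := by rw [pow_succ] at hr; omega
        omega
      have e1 : 2 ^ (e + 1) * n + r = 2 * (2 ^ e * n + q) := by
        rw [hq, pow_succ]; ring
      have e2 : 2 ^ (e + 1 + 1) + r = 2 * (2 ^ (e + 1) + q) := by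
        rw [hq, pow_succ 2 (e+1)]; ring
      have e3 : r = 2 * q := by omega
      rw [e1, e2, e3, he, he, he, ih q hq' n]
    · have hq' : q + 1 ≤ 2 ^ e := by
        have : 2 * q + 1 ≤ 2 * 2 ^ e := by rw [pow_succ] at hr; omega
        omega
      have hq'' : q ≤ 2 ^ e := by omega
      have e1 : 2 ^ (e + 1) * n + r = 2 * (2 ^ e * n + q) + 1 := by
        rw [hq, pow_succ]; ring
      have e2 : 2 ^ (e + 1 + 1) + r = 2 * (2 ^ (e + 1) + q) + 1 := by
        rw [hq, pow_succ 2 (e+1)]; ring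
      have e4 : 2 ^ e * n + q + 1 = 2 ^ e * n + (q + 1) := by ring
      rw [e1, e2, hq, ho, ho, ho, e4, ih q hq'' n, ih (q+1) hq' n]
      ring
end

section
/- Let z₂ : ℕ → ℤ be defined by z₂(0)=0, z₂(1)=1, and for n ≥ 0, z₂(2n)=−z₂(n), z₂(2n+1)=−z₂(n)+z₂(n+1). Then for all e ≥ 0 and 0 ≤ r ≤ 2^e, z₂(2^e + r) − z₂(r) = −z₂(5·2^e + r). -/
theorem z2_diff (z₂ : ℕ → ℤ) (h0 : z₂ 0 = 0) (h1 : z₂ 1 = 1)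
    (he : ∀ n, z₂ (2 * n) = -z₂ n)
    (ho : ∀ n, z₂ (2 * n + 1) = -z₂ n + z₂ (n + 1)) :
    ∀ e r : ℕ, r ≤ 2 ^ e →
      z₂ (2 ^ e + r) - z₂ r = -z₂ (5 * 2 ^ e + r) := by
  intro e
  induction e with
  | zero =>
    intro r hr
    have h2 := he 1
    have h3 := ho 1
    have h4 := he 2
    have h5 := ho 2
    have h6 := he 3
    norm_num at h2 h3 h4 h5 h6 ⊢
    interval_cases r <;> simp [h0, h1] <;> linarith
  | succ e ih =>
    intro r hr
    obtain ⟨q, rfl | rfl⟩ := Nat.even_or_odd' r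
    · have hq : q ≤ 2 ^ e := by
        have : (2:ℕ) ^ (e+1) = 2 * 2 ^ e := by ring
        omega
      have e1 : 2 ^ (e+1) + 2 * q = 2 * (2 ^ e + q) := by ring
      have e2 : 5 * 2 ^ (e+1) + 2 * q = 2 * (5 * 2 ^ e + q) := by ring
      rw [e1, e2, he, he, he]
      have := ih q hq
      linarith
    · have hq : q + 1 ≤ 2 ^ e := by
        have : (2:ℕ) ^ (e+1) = 2 * 2 ^ e := by ring
        omega
      have e1 : 2 ^ (e+1) + (2 * q + 1) = 2 * (2 ^ e + q) + 1 := by ring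
      have e2 : 5 * 2 ^ (e+1) + (2 * q + 1) = 2 * (5 * 2 ^ e + q) + 1 := by ring
      rw [e1, e2, ho, ho, ho]
      have i1 := ih q (by omega)
      have i2 := ih (q + 1) hq
      have e3 : 2 ^ e + q + 1 = 2 ^ e + (q + 1) := by ring
      have e4 : 5 * 2 ^ e + q + 1 = 5 * 2 ^ e + (q + 1) := by ring
      rw [e3, e4]
      linarith
end

section
/- Let z₃ : ℕ → ℤ be defined by z₃(0)=0, z₃(1)=1, and for n ≥ 1, z₃(2n)=−z₃(n), z₃(2n+1)=z₃(n)+z₃(n+1). Then for all e ≥ 0, 0 ≤ r ≤ 2^e, and n ≥ 0, z₃(2^e·n + r) = −z₃(2^{e+1} + r)·z₃(n) + z₃(r)·z₃(n+1). -/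
theorem z3_formula (z₃ : ℕ → ℤ) (h0 : z₃ 0 = 0) (h1 : z₃ 1 = 1)
    (he : ∀ n, 1 ≤ n → z₃ (2 * n) = -z₃ n)
    (ho : ∀ n, 1 ≤ n → z₃ (2 * n + 1) = z₃ n + z₃ (n + 1)) :
    ∀ e r : ℕ, r ≤ 2 ^ e → ∀ n : ℕ,
      z₃ (2 ^ e * n + r) = -z₃ (2 ^ (e + 1) + r) * z₃ n + z₃ r * z₃ (n + 1) := by
  have he' : ∀ n, z₃ (2 * n) = -z₃ n := by
    intro n
    rcases n with _ | n
    · simp [h0]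
    · exact he _ (Nat.succ_le_succ (Nat.zero_le _))
  have ho' : ∀ n, z₃ (2 * n + 1) = z₃ n + z₃ (n + 1) := by
    intro n
    rcases n with _ | n
    · simp [h0, h1]
    · exact ho _ (Nat.succ_le_succ (Nat.zero_le _))
  intro e
  induction e with
  | zero =>
    intro r hr n
    have h2 : z₃ 2 = -1 := by have := he' 1; rw [h1] at this; simpa using this
    have h3 : z₃ 3 = 0 := by
      have := ho' 1
      norm_num at this
      omega
    interval_cases r
    · simp [h0, h2]
    · simp [h1, h3]
  | succ e ih =>
    intro r hr n
    rcases Nat.even_or_odd r with ⟨s, hs⟩ | ⟨s, hs⟩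
    · have hs' : s ≤ 2 ^ e := by rw [pow_succ] at hr; omega
      have key : 2 ^ (e + 1) * n + r = 2 * (2 ^ e * n + s) := by subst hs; ring
      rw [key, he' (2 ^ e * n + s), ih s hs' n]
      have e2 : z₃ (2 ^ (e + 1 + 1) + r) = -z₃ (2 ^ (e + 1) + s) := by
        have := he' (2 ^ (e + 1) + s)
        rw [show 2 * (2 ^ (e + 1) + s) = 2 ^ (e + 1 + 1) + r by subst hs; ring] at this
        exact this
      have e3 : z₃ r = -z₃ s := by
        have := he' s
        rw [show 2 * s = r by omega] at this
        exact this
      rw [e2, e3]; ring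
    · have hs' : s + 1 ≤ 2 ^ e := by rw [pow_succ] at hr; omega
      have key : 2 ^ (e + 1) * n + r = 2 * (2 ^ e * n + s) + 1 := by subst hs; ring
      rw [key, ho' (2 ^ e * n + s),
        show 2 ^ e * n + s + 1 = 2 ^ e * n + (s + 1) by ring,
        ih s (by omega) n, ih (s + 1) hs' n]
      have e2 : z₃ (2 ^ (e + 1 + 1) + r)
          = z₃ (2 ^ (e + 1) + s) + z₃ (2 ^ (e + 1) + (s + 1)) := by
        have := ho' (2 ^ (e + 1) + s)
        rw [show 2 * (2 ^ (e + 1) + s) + 1 = 2 ^ (e + 1 + 1) + r by subst hs; ring,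
          show 2 ^ (e + 1) + s + 1 = 2 ^ (e + 1) + (s + 1) by ring] at this
        exact this
      have e3 : z₃ r = z₃ s + z₃ (s + 1) := by
        have := ho' s
        rw [show 2 * s + 1 = r by omega] at this
        exact this
      rw [e2, e3]; ring
end

section
/- For all integers e ≥ 0 and r with 0 ≤ r ≤ 2^e, the twisted Stern sequence satisfies t(2^e · n + r) = (−1)^e·(s(r)·t(n+1) + s(2^e − r)·t(n)) for n ≥ 1; in particular, taking n = 3 one gets t(2^e·(3+k)+r) = (−1)^e·(s(r)·t(k+4) + s(2^e−r)·t(k+3)) for all k ≥ 0. -/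
theorem twisted_reznick_shift (s : ℕ → ℤ) (h0 : s 0 = 0) (h1 : s 1 = 1)
    (he : ∀ n, s (2 * n) = s n) (ho : ∀ n, s (2 * n + 1) = s n + s (n + 1))
    (t : ℕ → ℤ) (t0 : t 0 = 0) (t1 : t 1 = 1)
    (te : ∀ n, 1 ≤ n → t (2 * n) = -t n) (todd : ∀ n, 1 ≤ n → t (2 * n + 1) = -t n - t (n + 1)) :
    (∀ e r : ℕ, r ≤ 2 ^ e → ∀ n : ℕ, 1 ≤ n →
      t (2 ^ e * n + r) = (-1) ^ e * (s r * t (n + 1) + s (2 ^ e - r) * t n)) ∧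
    (∀ e r : ℕ, r ≤ 2 ^ e → ∀ k : ℕ,
      t (2 ^ e * (3 + k) + r)
        = (-1) ^ e * (s r * t (k + 4) + s (2 ^ e - r) * t (k + 3))) := by
  have main : ∀ e r : ℕ, r ≤ 2 ^ e → ∀ n : ℕ, 1 ≤ n →
      t (2 ^ e * n + r) = (-1) ^ e * (s r * t (n + 1) + s (2 ^ e - r) * t n) := by
    intro e
    induction e with
    | zero =>
      intro r hr n hn
      interval_cases r <;> simp [h0, h1]
    | succ e ih =>
      have hpow : 0 < 2 ^ e := pow_pos (by norm_num : (0:ℕ) < 2) e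
      intro r hr n hn
      rw [pow_succ, mul_comm (2 ^ e) 2] at hr ⊢
      rcases Nat.even_or_odd r with ⟨q, hq⟩ | ⟨q, hq⟩
      · subst hq
        have hq2 : q ≤ 2 ^ e := by omega
        have hm : 1 ≤ 2 ^ e * n + q := by nlinarith
        have key : 2 * 2 ^ e * n + (q + q) = 2 * (2 ^ e * n + q) := by ring
        rw [key, te _ hm, ih q hq2 n hn]
        have hs1 : s (q + q) = s q := by rw [← two_mul, he]
        have hs2 : s (2 * 2 ^ e - (q + q)) = s (2 ^ e - q) := by
          have h : 2 * 2 ^ e - (q + q) = 2 * (2 ^ e - q) := by omega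
          rw [h, he]
        rw [hs1, hs2, pow_succ]; ring
      · subst hq
        have hq2 : q + 1 ≤ 2 ^ e := by omega
        have hm : 1 ≤ 2 ^ e * n + q := by nlinarith
        have key : 2 * 2 ^ e * n + (2 * q + 1) = 2 * (2 ^ e * n + q) + 1 := by ring
        have key2 : 2 ^ e * n + q + 1 = 2 ^ e * n + (q + 1) := by ring
        rw [key, todd _ hm, key2, ih q (by omega) n hn, ih (q + 1) hq2 n hn]
        have hs1 : s (2 * q + 1) = s q + s (q + 1) := ho q
        have hs2 : s (2 * 2 ^ e - (2 * q + 1)) = s (2 ^ e - (q + 1)) + s (2 ^ e - q) := by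
          have h : 2 * 2 ^ e - (2 * q + 1) = 2 * (2 ^ e - (q + 1)) + 1 := by omega
          have h2 : 2 ^ e - (q + 1) + 1 = 2 ^ e - q := by omega
          rw [h, ho, h2]
        rw [hs1, hs2, pow_succ]; ring
  refine ⟨main, fun e r hr k => ?_⟩
  have h := main e r hr (3 + k) (by omega)
  have e1 : 3 + k + 1 = k + 4 := by omega
  have e2 : 3 + k = k + 3 := by omega
  rw [e2]
  rw [e1, e2] at h
  exact h
end

section
/- Let v : ℕ → ℝ satisfy v(2n)=a·v(n) and v(2n+1)=b·v(n)+c·v(n+1) for all n ≥ n₀, and suppose there exist x₀, y₀ ≥ n₀ with v(x₀)·v(y₀+1) − v(y₀)·v(x₀+1) ≠ 0. Then for all e ≥ 0 and 0 ≤ r ≤ 2^e, the coefficients A, B with v(2^e·n+r)=A·v(n)+B·v(n+1) (for n ≥ n₀) are uniquely determined, and A = (v(y₀)·v(x₀+1) − v(x₀)·v(y₀+1))⁻¹·(v(x₀+1)·v(2^e·y₀+r) − v(y₀+1)·v(2^e·x₀+r)). -/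
theorem coeff_formula (v : ℕ → ℝ) (n₀ : ℕ) (a b c : ℝ)
    (he : ∀ n, n₀ ≤ n → v (2 * n) = a * v n)
    (ho : ∀ n, n₀ ≤ n → v (2 * n + 1) = b * v n + c * v (n + 1))
    (x₀ y₀ : ℕ) (hx : n₀ ≤ x₀) (hy : n₀ ≤ y₀)
    (hdet : v x₀ * v (y₀ + 1) - v y₀ * v (x₀ + 1) ≠ 0) :
    ∀ e r : ℕ, r ≤ 2 ^ e →
      (∀ A B A' B' : ℝ,
        (∀ n, n₀ ≤ n → v (2 ^ e * n + r) = A * v n + B * v (n + 1)) →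
        (∀ n, n₀ ≤ n → v (2 ^ e * n + r) = A' * v n + B' * v (n + 1)) →
        A = A' ∧ B = B') ∧
      (∀ A B : ℝ,
        (∀ n, n₀ ≤ n → v (2 ^ e * n + r) = A * v n + B * v (n + 1)) →
        A = (v y₀ * v (x₀ + 1) - v x₀ * v (y₀ + 1))⁻¹ *
              (v (x₀ + 1) * v (2 ^ e * y₀ + r) - v (y₀ + 1) * v (2 ^ e * x₀ + r))) := by
  intro e r _hr
  constructor
  · intro A B A' B' h1 h2
    have e1 : A * v x₀ + B * v (x₀ + 1) = A' * v x₀ + B' * v (x₀ + 1) :=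
      (h1 x₀ hx).symm.trans (h2 x₀ hx)
    have e2 : A * v y₀ + B * v (y₀ + 1) = A' * v y₀ + B' * v (y₀ + 1) :=
      (h1 y₀ hy).symm.trans (h2 y₀ hy)
    have hA : (A - A') * (v x₀ * v (y₀ + 1) - v y₀ * v (x₀ + 1)) = 0 := by
      linear_combination v (y₀ + 1) * e1 - v (x₀ + 1) * e2
    have hB : (B - B') * (v x₀ * v (y₀ + 1) - v y₀ * v (x₀ + 1)) = 0 := by
      linear_combination v x₀ * e2 - v y₀ * e1
    constructor
    · have := (mul_eq_zero.1 hA).resolve_right hdet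
      linarith
    · have := (mul_eq_zero.1 hB).resolve_right hdet
      linarith
  · intro A B h
    have e1 := h x₀ hx
    have e2 := h y₀ hy
    have hd : v y₀ * v (x₀ + 1) - v x₀ * v (y₀ + 1) ≠ 0 := by
      intro hc; apply hdet; linarith
    field_simp
    linear_combination v (y₀ + 1) * e1 - v (x₀ + 1) * e2
end

section
/- Define y : ℕ → ℕ by y(n) = P(n+1) where P is the block-complexity of the Thue-Morse sequence, which satisfies P(2n) = P(n) + P(n+1) and P(2n+1) = 2·P(n+1) for n ≥ 2. Then for all e ≥ 0 and 0 ≤ r ≤ 2^e there exist constants A, B (depending on e, r) such that y(2^e·n + r) = A·y(n) + B·y(n+1) for all n ≥ 2. -/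
theorem thue_morse_complexity (y : ℕ → ℕ) (h0 : y 0 = 2) (h1 : y 1 = 4)
    (he : ∀ n, 2 ≤ n → y (2 * n) = 2 * y n)
    (ho : ∀ n, 2 ≤ n → y (2 * n + 1) = y n + y (n + 1)) :
    ∀ e r : ℕ, r ≤ 2 ^ e → ∃ A B : ℕ, ∀ n, 2 ≤ n →
      y (2 ^ e * n + r) = A * y n + B * y (n + 1) := by
  intro e
  induction e with
  | zero =>
    intro r hr
    interval_cases r
    · exact ⟨1, 0, fun n _ => by simp⟩
    · exact ⟨0, 1, fun n _ => by simp⟩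
  | succ e ih =>
    intro r hr
    have h2 : (2:ℕ) ^ (e + 1) = 2 * 2 ^ e := by rw [pow_succ]; ring
    have hpos : 1 ≤ 2 ^ e := Nat.one_le_two_pow
    rcases Nat.even_or_odd r with ⟨q, hq⟩ | ⟨q, hq⟩
    · have hq' : q ≤ 2 ^ e := by omega
      obtain ⟨A, B, hAB⟩ := ih q hq'
      refine ⟨2 * A, 2 * B, fun n hn => ?_⟩
      have hm : 2 ≤ 2 ^ e * n + q := by nlinarith
      have key : 2 ^ (e + 1) * n + r = 2 * (2 ^ e * n + q) := by rw [h2]; ring_nf; omega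
      rw [key, he _ hm, hAB n hn]; ring
    · have hq' : q ≤ 2 ^ e := by omega
      have hq1 : q + 1 ≤ 2 ^ e := by omega
      obtain ⟨A, B, hAB⟩ := ih q hq'
      obtain ⟨A', B', hAB'⟩ := ih (q + 1) hq1
      refine ⟨A + A', B + B', fun n hn => ?_⟩
      have hm : 2 ≤ 2 ^ e * n + q := by nlinarith
      have key : 2 ^ (e + 1) * n + r = 2 * (2 ^ e * n + q) + 1 := by rw [h2]; ring_nf; omega
      have key2 : 2 ^ e * n + q + 1 = 2 ^ e * n + (q + 1) := by ring
      rw [key, ho _ hm, hAB n hn, key2, hAB' n hn]; ring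
end
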